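/- There exist effects a, b, c on ℂ³ with a + b ≤ I such that a and c are not compatible (ac ≠ ca) yet a and b are additive relative to c, namely (a+b)∘c = a∘c + b∘c. Concretely, a = diag(1,0,0), b = diag(0,0,1), and c = (1/2)·[[1,1,0],[1,1,0],[0,0,0]] satisfy cb = 0, ac ≠ ca, and (a+b)∘c = a∘c + b∘c = (1/2) a. -/

import Mathlib

open Matrix
open scoped Classical ComplexOrder

/-- The positive square root of a positive semidefinite matrix
(junk value `0` on non-positive-semidefinite matrices). -/
noncomputable def sqrtM {ι : Type*} [Fintype ι] [DecidableEq ι] (a : Matrix ι ι ℂ) :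
    Matrix ι ι ℂ :=
  if h : a.PosSemidef then
    h.1.eigenvectorUnitary.1 * diagonal ((↑) ∘ Real.sqrt ∘ h.1.eigenvalues) *
      (star h.1.eigenvectorUnitary : Matrix ι ι ℂ)
  else 0

/-- The sequential product `a ∘ b = a^{1/2} b a^{1/2}` of effects. -/
noncomputable def seqProd {ι : Type*} [Fintype ι] [DecidableEq ι] (a b : Matrix ι ι ℂ) :
    Matrix ι ι ℂ :=
  sqrtM a * b * sqrtM a

/-- An effect: an operator `a` with `0 ≤ a ≤ I` in the Loewner order. -/
def IsEffect {ι : Type*} [Fintype ι] [DecidableEq ι] (a : Matrix ι ι ℂ) : Prop :=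
  a.PosSemidef ∧ (1 - a).PosSemidef

/-- The effect `a` of the counterexample: the projection `diag(1,0,0)` on `ℂ³`. -/
noncomputable def aM : Matrix (Fin 3) (Fin 3) ℂ := !![1,0,0; 0,0,0; 0,0,0]

/-- The effect `b` of the counterexample: the projection `diag(0,0,1)` on `ℂ³`. -/
noncomputable def bM : Matrix (Fin 3) (Fin 3) ℂ := !![0,0,0; 0,0,0; 0,0,1]

/-- The effect `c` of the counterexample. -/
noncomputable def cM : Matrix (Fin 3) (Fin 3) ℂ := (1/2 : ℂ) • !![1,1,0; 1,1,0; 0,0,0]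

lemma proj_psd {ι : Type*} [Fintype ι] [DecidableEq ι] {p : Matrix ι ι ℂ}
    (h1 : pᴴ = p) (h2 : p * p = p) : p.PosSemidef := by
  have : p = pᴴ * p := by rw [h1, h2]
  rw [this]
  exact Matrix.posSemidef_conjTranspose_mul_self p

lemma sqrtM_proj {ι : Type*} [Fintype ι] [DecidableEq ι] {p : Matrix ι ι ℂ}
    (h1 : pᴴ = p) (h2 : p * p = p) : sqrtM p = p := by
  have hp := proj_psd h1 h2
  rw [sqrtM, dif_pos hp]
  have key : ∀ i, Real.sqrt (hp.1.eigenvalues i) = hp.1.eigenvalues i := by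
    intro i
    have hv := hp.1.mulVec_eigenvectorBasis i
    have hvv : p *ᵥ (p *ᵥ ⇑(hp.1.eigenvectorBasis i)) = p *ᵥ ⇑(hp.1.eigenvectorBasis i) := by
      rw [mulVec_mulVec, h2]
    rw [hv, mulVec_smul, hv, smul_smul, ← sub_eq_zero, ← sub_smul, smul_eq_zero] at hvv
    have hne : (⇑(hp.1.eigenvectorBasis i) : ι → ℂ) ≠ 0 := by
      intro h0
      apply hp.1.eigenvectorBasis.orthonormal.ne_zero i
      ext j; exact congrFun h0 j
    have hl : hp.1.eigenvalues i * hp.1.eigenvalues i = hp.1.eigenvalues i := by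
      rcases hvv with h | h
      · linarith [sub_eq_zero.mp h]
      · exact absurd h hne
    have h0 : 0 ≤ hp.1.eigenvalues i := hp.eigenvalues_nonneg i
    rw [Real.sqrt_eq_iff_mul_self_eq h0 h0]
    exact hl.symm
  have hfun : ((↑) ∘ Real.sqrt ∘ hp.1.eigenvalues : ι → ℂ) = RCLike.ofReal ∘ hp.1.eigenvalues := by
    funext i; simp [key i]
  rw [hfun]
  conv_rhs => rw [hp.1.spectral_theorem, Unitary.conjStarAlgAut_apply]

/-- The concrete effects `a`, `b`, `c` on `ℂ³` satisfy: `a ⊥ b`, `cb = 0`, `a` and `c`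
are not compatible, yet `a` and `b` are additive relative to `c`, with
`(a+b)∘c = a∘c + b∘c = (1/2)a`. -/
theorem stmt_17 :
    IsEffect aM ∧ IsEffect bM ∧ IsEffect cM ∧ (1 - (aM + bM)).PosSemidef ∧
    cM * bM = 0 ∧ aM * cM ≠ cM * aM ∧
    seqProd (aM + bM) cM = seqProd aM cM + seqProd bM cM ∧
    seqProd aM cM + seqProd bM cM = (1/2 : ℂ) • aM := by
  have haH : aMᴴ = aM := by
    ext i j; fin_cases i <;> fin_cases j <;> simp [aM, Matrix.conjTranspose_apply, Matrix.vecHead, Matrix.vecTail]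
  have haa : aM * aM = aM := by
    ext i j; fin_cases i <;> fin_cases j <;>
      simp [aM, Matrix.mul_apply, Fin.sum_univ_three, Matrix.vecHead, Matrix.vecTail]
  have hbH : bMᴴ = bM := by
    ext i j; fin_cases i <;> fin_cases j <;> simp [bM, Matrix.conjTranspose_apply, Matrix.vecHead, Matrix.vecTail]
  have hbb : bM * bM = bM := by
    ext i j; fin_cases i <;> fin_cases j <;>
      simp [bM, Matrix.mul_apply, Fin.sum_univ_three, Matrix.vecHead, Matrix.vecTail]
  have hcH : cMᴴ = cM := by
    ext i j; fin_cases i <;> fin_cases j <;>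
      simp [cM, Matrix.conjTranspose_apply, Matrix.vecHead, Matrix.vecTail]
  have hcc : cM * cM = cM := by
    ext i j; fin_cases i <;> fin_cases j <;>
      simp [cM, Matrix.mul_apply, Fin.sum_univ_three, Matrix.vecHead, Matrix.vecTail] <;> ring
  have h1aH : (1 - aM)ᴴ = 1 - aM := by
    rw [Matrix.conjTranspose_sub, haH, Matrix.conjTranspose_one]
  have h1aa : (1 - aM) * (1 - aM) = 1 - aM := by
    rw [Matrix.sub_mul, Matrix.mul_sub, Matrix.mul_sub, haa]; simp
  have h1bH : (1 - bM)ᴴ = 1 - bM := by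
    rw [Matrix.conjTranspose_sub, hbH, Matrix.conjTranspose_one]
  have h1bb : (1 - bM) * (1 - bM) = 1 - bM := by
    rw [Matrix.sub_mul, Matrix.mul_sub, Matrix.mul_sub, hbb]; simp
  have h1cH : (1 - cM)ᴴ = 1 - cM := by
    rw [Matrix.conjTranspose_sub, hcH, Matrix.conjTranspose_one]
  have h1cc : (1 - cM) * (1 - cM) = 1 - cM := by
    rw [Matrix.sub_mul, Matrix.mul_sub, Matrix.mul_sub, hcc]; simp
  have habH : (aM + bM)ᴴ = aM + bM := by
    rw [Matrix.conjTranspose_add, haH, hbH]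
  have hab : aM * bM = 0 := by
    ext i j; fin_cases i <;> fin_cases j <;>
      simp [aM, bM, Matrix.mul_apply, Fin.sum_univ_three, Matrix.vecHead, Matrix.vecTail]
  have hba : bM * aM = 0 := by
    ext i j; fin_cases i <;> fin_cases j <;>
      simp [aM, bM, Matrix.mul_apply, Fin.sum_univ_three, Matrix.vecHead, Matrix.vecTail]
  have habab : (aM + bM) * (aM + bM) = aM + bM := by
    rw [Matrix.add_mul, Matrix.mul_add, Matrix.mul_add, haa, hbb, hab, hba]; simp
  have h1abH : (1 - (aM + bM))ᴴ = 1 - (aM + bM) := by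
    rw [Matrix.conjTranspose_sub, habH, Matrix.conjTranspose_one]
  have h1abab : (1 - (aM + bM)) * (1 - (aM + bM)) = 1 - (aM + bM) := by
    rw [Matrix.sub_mul, Matrix.mul_sub, Matrix.mul_sub, habab]; simp
  have hcb : cM * bM = 0 := by
    ext i j; fin_cases i <;> fin_cases j <;>
      simp [cM, bM, Matrix.mul_apply, Fin.sum_univ_three, Matrix.vecHead, Matrix.vecTail]
  have hbc : bM * cM = 0 := by
    ext i j; fin_cases i <;> fin_cases j <;>
      simp [cM, bM, Matrix.mul_apply, Fin.sum_univ_three, Matrix.vecHead, Matrix.vecTail]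
  have haca : aM * cM * aM = (1/2 : ℂ) • aM := by
    ext i j; fin_cases i <;> fin_cases j <;>
      simp [aM, cM, Matrix.mul_apply, Fin.sum_univ_three, Matrix.vecHead, Matrix.vecTail]
  refine ⟨⟨proj_psd haH haa, proj_psd h1aH h1aa⟩,
    ⟨proj_psd hbH hbb, proj_psd h1bH h1bb⟩,
    ⟨proj_psd hcH hcc, proj_psd h1cH h1cc⟩,
    proj_psd h1abH h1abab, hcb, ?_, ?_, ?_⟩
  · intro h
    have h2 := congrFun (congrFun h 0) 1
    simp [aM, cM, Matrix.mul_apply, Fin.sum_univ_three, Matrix.vecHead, Matrix.vecTail] at h2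
  · rw [seqProd, seqProd, seqProd, sqrtM_proj habH habab, sqrtM_proj haH haa,
      sqrtM_proj hbH hbb]
    simp [Matrix.add_mul, Matrix.mul_add, hbc, mul_assoc, hcb]
  · rw [seqProd, seqProd, sqrtM_proj haH haa, sqrtM_proj hbH hbb, haca, hbc]
    simp
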